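/- arXiv:2409.12511 — 2 statements merged into one kernel-verified Lean document; each statement's English description precedes it below -/
import Mathlib

section
/- Let ω, V ⊂ ℝⁿ be open domains and φ : ω → V a C² diffeomorphism. Let A : ω → Sym_n be a symmetric tensor whose entries are Radon measures, and define the push-forward tensor φ_*A over V by ⟨φ_*A, M⟩_V := ⟨dφᵀ A dφ, M∘φ⟩_ω for every M ∈ C_c(V; M_n(ℝ)). Then the row-wise divergence of φ_*A satisfies ⟨Div(φ_*A), Y⟩_V = ⟨(Div A) dφ + A : D²φ, Y∘φ⟩_ω for every Y ∈ D(V; ℝⁿ); here the i-th coordinate of (Div A) dφ + A : D²φ equals (Div A)·∇φ_i + Tr(A D²φ_i) = div(A ∇φ_i). -/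
open MeasureTheory Metric Set Filter Topology
open scoped Pointwise ENNReal NNReal

noncomputable section

abbrev Euc (n : ℕ) := EuclideanSpace ℝ (Fin n)

/-- Integral of a real function against a signed measure. -/
def sInt {α : Type*} [MeasurableSpace α] (μ : MeasureTheory.SignedMeasure α) (f : α → ℝ) : ℝ :=
  ∫ x, f x ∂μ.toJordanDecomposition.posPart - ∫ x, f x ∂μ.toJordanDecomposition.negPart

/-- A signed measure is concentrated on the set `S`. -/
def SuppOn {α : Type*} [MeasurableSpace α] (μ : MeasureTheory.SignedMeasure α) (S : Set α) : Prop :=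
  ∀ t : Set α, MeasurableSet t → t ∩ S = ∅ → μ t = 0

/-- Total variation mass of a finite family of signed measures, seen as a vector measure,
via duality against continuous fields of pointwise Euclidean norm at most one. -/
def vmass {α : Type*} [MeasurableSpace α] [TopologicalSpace α] {ι : Type*} [Fintype ι]
    (g : ι → MeasureTheory.SignedMeasure α) : ℝ :=
  sSup { r | ∃ Y : ι → α → ℝ, (∀ i, Continuous (Y i)) ∧ (∀ x, ∑ i, (Y i x) ^ 2 ≤ 1) ∧
      r = ∑ i, sInt (g i) (Y i) }

/-- `j`-th partial derivative. -/
def pd {n : ℕ} (j : Fin n) (ψ : Euc n → ℝ) (x : Euc n) : ℝ :=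
  fderiv ℝ ψ x (EuclideanSpace.single j 1)

/-- Smooth test function compactly supported in `U`. -/
def IsTestFun {n : ℕ} (U : Set (Euc n)) (ψ : Euc n → ℝ) : Prop :=
  ContDiff ℝ (⊤ : ℕ∞) ψ ∧ HasCompactSupport ψ ∧ tsupport ψ ⊆ U

/-- A `C¹` function with compact support (representing an element of `C¹(Ū)`). -/
def IsC1 {n : ℕ} (Y : Euc n → ℝ) : Prop := ContDiff ℝ 1 Y ∧ HasCompactSupport Y

/-- A symmetric Div-BV tensor on `U`: the entries and the row-wise distributional
divergence are finite (signed) Radon measures carried by `U`. -/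
structure DivBV (n : ℕ) (U : Set (Euc n)) where
  A : Fin n → Fin n → MeasureTheory.SignedMeasure (Euc n)
  divA : Fin n → MeasureTheory.SignedMeasure (Euc n)
  symm : ∀ i j, A i j = A j i
  suppA : ∀ i j, SuppOn (A i j) U
  suppDiv : ∀ i, SuppOn (divA i) U
  weak : ∀ i, ∀ ψ : Euc n → ℝ, IsTestFun U ψ →
    ∑ j, sInt (A i j) (pd j ψ) = - sInt (divA i) ψ

/-- Positive semi-definiteness of a matrix of measures. -/
def DivBV.PSD {n : ℕ} {U : Set (Euc n)} (T : DivBV n U) : Prop :=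
  ∀ ξ : Fin n → ℝ, ∀ s : Set (Euc n), MeasurableSet s →
    0 ≤ ∑ i, ∑ j, ξ i * ξ j * (T.A i j) s

/-- Density (Radon–Nikodym derivative w.r.t. Lebesgue) of a signed measure. -/
def sdens {n : ℕ} (μ : MeasureTheory.SignedMeasure (Euc n)) (x : Euc n) : ℝ :=
  (μ.toJordanDecomposition.posPart.rnDeriv volume x).toReal -
  (μ.toJordanDecomposition.negPart.rnDeriv volume x).toReal

/-- Pointwise determinant of the absolutely continuous part of a Div-BV tensor. -/
def DivBV.detDens {n : ℕ} {U : Set (Euc n)} (T : DivBV n U) (x : Euc n) : ℝ :=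
  Matrix.det (Matrix.of fun i j => sdens (T.A i j) x)

/-- Total mass `‖A‖_{M(U)}` of the tensor. -/
def DivBV.massA {n : ℕ} {U : Set (Euc n)} (T : DivBV n U) : ℝ :=
  vmass (fun p : Fin n × Fin n => T.A p.1 p.2)

/-- Total mass `‖Div A‖_{M(U)}` of the divergence. -/
def DivBV.massDiv {n : ℕ} {U : Set (Euc n)} (T : DivBV n U) : ℝ :=
  vmass T.divA

/-- The pairing `⟨A, ∇Y⟩_U + ⟨Div A, Y⟩_U` defining the normal trace `γ_ν A`. -/
def DivBV.tracePair {n : ℕ} {U : Set (Euc n)} (T : DivBV n U) (Y : Fin n → Euc n → ℝ) : ℝ :=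
  (∑ i, ∑ j, sInt (T.A i j) (pd j (Y i))) + ∑ i, sInt (T.divA i) (Y i)

/-- The normal trace `γ_ν A` is represented by the vector-valued measure `g` on `∂U`. -/
def DivBV.TraceMeas {n : ℕ} {U : Set (Euc n)} (T : DivBV n U)
    (g : Fin n → MeasureTheory.SignedMeasure (Euc n)) : Prop :=
  (∀ i, SuppOn (g i) (frontier U)) ∧
  ∀ Y : Fin n → Euc n → ℝ, (∀ i, IsC1 (Y i)) →
    T.tracePair Y = ∑ i, sInt (g i) (Y i)

/-- The tangential part `γ_ν^τ A` of the normal trace is represented by the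
vector-valued measure `g` on `∂U` (with outer unit normal field `ν`): `g` is carried by `∂U`,
is tangential, and represents the trace pairing against all `C¹` fields tangential along `∂U`. -/
def DivBV.TangTraceMeas {n : ℕ} {U : Set (Euc n)} (T : DivBV n U) (ν : Euc n → Euc n)
    (g : Fin n → MeasureTheory.SignedMeasure (Euc n)) : Prop :=
  (∀ i, SuppOn (g i) (frontier U)) ∧
  (∀ φ : Euc n → ℝ, Continuous φ → ∑ i, sInt (g i) (fun x => φ x * ν x i) = 0) ∧
  ∀ Y : Fin n → Euc n → ℝ, (∀ i, IsC1 (Y i)) →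
    (∀ x ∈ frontier U, ∑ i, Y i x * ν x i = 0) →
    T.tracePair Y = ∑ i, sInt (g i) (Y i)

/-- A domain whose boundary is a `C^k` hypersurface, presented by a defining function. -/
structure CkDomain (n k : ℕ) (U : Set (Euc n)) where
  f : Euc n → ℝ
  O : Set (Euc n)
  opO : IsOpen O
  front : frontier U ⊆ O
  smooth : ContDiffOn ℝ k f O
  grad_ne : ∀ x ∈ frontier U, gradient f x ≠ 0
  neg : ∀ x ∈ O ∩ U, f x < 0
  pos : ∀ x ∈ O \ closure U, 0 < f x
  zero : ∀ x ∈ frontier U, f x = 0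

/-- The outer unit normal field (normalized gradient of the defining function). -/
def CkDomain.nu {n k : ℕ} {U : Set (Euc n)} (B : CkDomain n k U) (x : Euc n) : Euc n :=
  ‖gradient B.f x‖⁻¹ • gradient B.f x

/-- `L(Σ)`: the largest `L` such that every point at distance `< L` of `Σ` has a unique
nearest point on `Σ`. -/
def uniqRadius {n : ℕ} (S : Set (Euc n)) : ℝ :=
  sSup { L : ℝ | 0 ≤ L ∧ ∀ x : Euc n, infDist x S < L →
    ∃! a, a ∈ S ∧ dist x a = infDist x S }

open Classical in
/-- Nearest-point projection on `S` (junk value if no nearest point exists). -/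
def nearestPt {n : ℕ} (S : Set (Euc n)) (x : Euc n) : Euc n :=
  if h : ∃ a, a ∈ S ∧ dist x a = infDist x S then h.choose else x

/-- The geometric extension `ν ∘ π_Σ` of the unit normal to a tubular neighbourhood. -/
def CkDomain.nuGeo {n k : ℕ} {U : Set (Euc n)} (B : CkDomain n k U) (x : Euc n) : Euc n :=
  B.nu (nearestPt (frontier U) x)

/-- `K(Σ) = max (1/L(Σ), L(Σ) ‖D²ν‖_∞)`. -/
def CkDomain.Kconst {n k : ℕ} {U : Set (Euc n)} (B : CkDomain n k U) : ℝ :=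
  max (uniqRadius (frontier U))⁻¹
    (uniqRadius (frontier U) *
      sSup ((fun a => ‖fderiv ℝ (fderiv ℝ B.nuGeo) a‖) '' frontier U))

/-- The reflection `σ(x) = 2π_Σ(x) − x` across `Σ`. -/
def reflAcross {n : ℕ} (S : Set (Euc n)) (x : Euc n) : Euc n :=
  (2 : ℝ) • nearestPt S x - x


/-- Entry `(i, α)` of the Jacobian matrix `dφ`. -/
def dcomp {n : ℕ} (φ : Euc n → Euc n) (i α : Fin n) (x : Euc n) : ℝ :=
  fderiv ℝ φ x (EuclideanSpace.single α 1) i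

/-- Entry `(α, β)` of the Hessian `D²φ_i` of the `i`-th component of `φ`. -/
def d2comp {n : ℕ} (φ : Euc n → Euc n) (i α β : Fin n) (x : Euc n) : ℝ :=
  fderiv ℝ (fderiv ℝ φ) x (EuclideanSpace.single α 1) (EuclideanSpace.single β 1) i

open scoped Convolution Manifold

namespace Stmt6Aux

lemma parts_null {α : Type*} [MeasurableSpace α] {μ : MeasureTheory.SignedMeasure α} {S : Set α}
    (h : SuppOn μ S) (hS : MeasurableSet S) :
    μ.toJordanDecomposition.posPart Sᶜ = 0 ∧ μ.toJordanDecomposition.negPart Sᶜ = 0 := by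
  obtain ⟨i, hi₁, hi₂, hi₃, hpos, hneg⟩ := μ.toJordanDecomposition_spec
  constructor
  · rw [hpos, MeasureTheory.SignedMeasure.toMeasureOfZeroLE_apply _ hi₂ hi₁ hS.compl]
    have h0 : μ (i ∩ Sᶜ) = 0 := h _ (hi₁.inter hS.compl) (by ext x; simp)
    simp [h0]
  · rw [hneg, MeasureTheory.SignedMeasure.toMeasureOfLEZero_apply _ hi₃ hi₁.compl hS.compl]
    have h0 : μ (iᶜ ∩ Sᶜ) = 0 := h _ (hi₁.compl.inter hS.compl) (by ext x; simp)
    simp [h0]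

lemma sInt_congr {α : Type*} [MeasurableSpace α] {μ : MeasureTheory.SignedMeasure α} {S : Set α}
    (h : SuppOn μ S) (hS : MeasurableSet S) {f g : α → ℝ} (hfg : Set.EqOn f g S) :
    sInt μ f = sInt μ g := by
  obtain ⟨h1, h2⟩ := parts_null h hS
  have key : ∀ ν : Measure α, ν Sᶜ = 0 → ∫ x, f x ∂ν = ∫ x, g x ∂ν := by
    intro ν hν
    apply integral_congr_ae
    rw [Filter.EventuallyEq, ae_iff]
    refine measure_mono_null (fun x hx => ?_) hν
    simp only [Set.mem_setOf_eq] at hx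
    simp only [Set.mem_compl_iff]
    exact fun hxS => hx (hfg hxS)
  unfold sInt
  rw [key _ h1, key _ h2]

lemma sInt_add {α : Type*} [MeasurableSpace α] {μ : MeasureTheory.SignedMeasure α} {f g : α → ℝ}
    (hf1 : Integrable f μ.toJordanDecomposition.posPart)
    (hf2 : Integrable f μ.toJordanDecomposition.negPart)
    (hg1 : Integrable g μ.toJordanDecomposition.posPart)
    (hg2 : Integrable g μ.toJordanDecomposition.negPart) :
    sInt μ (fun x => f x + g x) = sInt μ f + sInt μ g := by
  unfold sInt
  rw [integral_add hf1 hg1, integral_add hf2 hg2]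
  ring

lemma sInt_finsum {α : Type*} [MeasurableSpace α] {μ : MeasureTheory.SignedMeasure α}
    {ι : Type*} [Fintype ι] {f : ι → α → ℝ}
    (h1 : ∀ i, Integrable (f i) μ.toJordanDecomposition.posPart)
    (h2 : ∀ i, Integrable (f i) μ.toJordanDecomposition.negPart) :
    sInt μ (fun x => ∑ i, f i x) = ∑ i, sInt μ (f i) := by
  unfold sInt
  rw [integral_finset_sum _ (fun i _ => h1 i), integral_finset_sum _ (fun i _ => h2 i),
    Finset.sum_sub_distrib]

lemma integrable_of_concentrated {n : ℕ} {ν : Measure (Euc n)} [IsFiniteMeasure ν]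
    {S K : Set (Euc n)} (hS : MeasurableSet S) (hν : ν Sᶜ = 0) {f : Euc n → ℝ}
    (hf : ContinuousOn f S) (hK : IsCompact K) (hKS : K ⊆ S)
    (hzero : ∀ x ∈ S \ K, f x = 0) : Integrable f ν := by
  have hae : ∀ᵐ x ∂ν, x ∈ S := by
    rw [ae_iff]
    exact hν
  have hres : ν.restrict S = ν := Measure.restrict_eq_self_of_ae_mem hae
  obtain ⟨C, hC⟩ := hK.exists_bound_of_continuousOn (hf.mono hKS)
  constructor
  · rw [← hres]
    exact hf.aestronglyMeasurable hS
  · apply MeasureTheory.HasFiniteIntegral.of_bounded (C := max C 0)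
    filter_upwards [hae] with x hx
    by_cases hxK : x ∈ K
    · exact le_max_of_le_left (hC x hxK)
    · rw [hzero x ⟨hx, hxK⟩]
      simp

lemma sInt_tendsto {n : ℕ} (μ : MeasureTheory.SignedMeasure (Euc n)) {F : ℕ → Euc n → ℝ}
    {f : Euc n → ℝ} {C : ℝ} (hFc : ∀ k, Continuous (F k)) (hb : ∀ k x, ‖F k x‖ ≤ C)
    (hpt : ∀ x, Filter.Tendsto (fun k => F k x) Filter.atTop (nhds (f x))) :
    Filter.Tendsto (fun k => sInt μ (F k)) Filter.atTop (nhds (sInt μ f)) := by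
  unfold sInt
  apply Filter.Tendsto.sub
  all_goals
    exact tendsto_integral_of_dominated_convergence (fun _ => C)
      (fun k => (hFc k).aestronglyMeasurable) (integrable_const _)
      (fun k => Filter.Eventually.of_forall (hb k)) (Filter.Eventually.of_forall hpt)

lemma conv_bound {n : ℕ} (f : ContDiffBump (0 : Euc n)) {h : Euc n → ℝ} {C : ℝ}
    (hC : ∀ x, ‖h x‖ ≤ C) (x : Euc n) :
    ‖(f.normed volume ⋆[ContinuousLinearMap.lsmul ℝ ℝ, volume] h) x‖ ≤ C := by
  rw [convolution_def]
  calc ‖∫ t, (ContinuousLinearMap.lsmul ℝ ℝ) (f.normed volume t) (h (x - t)) ∂volume‖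
      ≤ ∫ t, ‖(ContinuousLinearMap.lsmul ℝ ℝ) (f.normed volume t) (h (x - t))‖ ∂volume :=
        norm_integral_le_integral_norm _
    _ ≤ ∫ t, f.normed volume t * C ∂volume := by
        apply integral_mono_of_nonneg (Filter.Eventually.of_forall fun t => norm_nonneg _)
          ((f.integrable_normed).mul_const C)
        apply Filter.Eventually.of_forall
        intro t
        simp only [ContinuousLinearMap.lsmul_apply, smul_eq_mul, norm_mul]
        calc ‖f.normed volume t‖ * ‖h (x - t)‖ = f.normed volume t * ‖h (x - t)‖ := by
              rw [Real.norm_of_nonneg (f.nonneg_normed t)]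
          _ ≤ f.normed volume t * C := mul_le_mul_of_nonneg_left (hC _) (f.nonneg_normed t)
    _ = C := by rw [integral_mul_const, f.integral_normed, one_mul]

lemma clm_apply_sum {n : ℕ} (L : Euc n →L[ℝ] ℝ) (w : Euc n) :
    L w = ∑ j, w j * L (EuclideanSpace.single j 1) := by
  have hw : w = ∑ j, w j • EuclideanSpace.single j (1 : ℝ) := by
    ext k
    rw [WithLp.ofLp_sum, Fintype.sum_apply]
    simp only [PiLp.smul_apply, EuclideanSpace.single_apply, smul_eq_mul]
    simp [Finset.sum_ite_eq' Finset.univ k]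
  conv_lhs => rw [hw]
  rw [map_sum]
  simp [smul_eq_mul]


lemma weakC1 {n : ℕ} {ω : Set (Euc n)} (hω : IsOpen ω) (T : DivBV n ω) (α : Fin n)
    {ψ : Euc n → ℝ} (hψ : ContDiff ℝ 1 ψ) (hcs : HasCompactSupport ψ) (hts : tsupport ψ ⊆ ω) :
    ∑ β, sInt (T.A α β) (pd β ψ) = - sInt (T.divA α) ψ := by
  classical
  have hKc : IsCompact (tsupport ψ) := hcs
  obtain ⟨δ, δpos, hδ⟩ := hKc.exists_cthickening_subset_open hω hts
  set L : ℝ →L[ℝ] ℝ →L[ℝ] ℝ := ContinuousLinearMap.lsmul ℝ ℝ with hL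
  have hψcont : Continuous ψ := hψ.continuous
  have hψloc : LocallyIntegrable ψ volume := hψcont.locallyIntegrable
  let bump : ℕ → ContDiffBump (0 : Euc n) := fun k =>
    ⟨δ / (2 * (k + 1)), δ / (k + 1), by positivity, by
      rw [div_lt_div_iff₀ (by positivity) (by positivity)]
      have : (0:ℝ) ≤ (k:ℝ) := Nat.cast_nonneg k
      nlinarith⟩
  set ψk : ℕ → Euc n → ℝ := fun k => (bump k).normed volume ⋆[L, volume] ψ with hψk
  have hbout : Tendsto (fun k => (bump k).rOut) atTop (𝓝 0) := by
    have h1 : Tendsto (fun k : ℕ => ((k : ℝ) + 1)) atTop atTop :=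
      tendsto_atTop_add_const_right _ 1 tendsto_natCast_atTop_atTop
    have := (tendsto_const_nhds (x := δ) (f := (atTop : Filter ℕ))).div_atTop h1
    simpa [bump] using this
  have hsupp : ∀ k, tsupport (ψk k) ⊆ cthickening δ (tsupport ψ) := by
    intro k
    have h1 : Function.support (ψk k) ⊆ Metric.closedBall 0 δ + tsupport ψ := by
      refine (support_convolution_subset L).trans (Set.add_subset_add ?_ subset_closure)
      refine subset_closure.trans ?_
      show tsupport ((bump k).normed volume) ⊆ _
      rw [(bump k).tsupport_normed_eq]
      refine Metric.closedBall_subset_closedBall ?_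
      refine div_le_self δpos.le ?_
      have : (0:ℝ) ≤ (k:ℝ) := Nat.cast_nonneg k
      linarith
    have h2 : Metric.closedBall (0 : Euc n) δ + tsupport ψ ⊆ cthickening δ (tsupport ψ) := by
      rintro z ⟨a, ha, b, hb, rfl⟩
      refine mem_cthickening_of_dist_le _ b δ _ hb ?_
      have : dist (a + b) b = ‖a‖ := by simp [dist_eq_norm]
      rw [this]
      simpa using mem_closedBall_iff_norm.1 ha
    exact closure_minimal (h1.trans h2) isClosed_cthickening
  have hcsk : ∀ k, HasCompactSupport (ψk k) := fun k =>
    IsCompact.of_isClosed_subset (hKc.cthickening) (isClosed_tsupport _) (hsupp k)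
  have htest : ∀ k, IsTestFun ω (ψk k) := by
    intro k
    refine ⟨?_, hcsk k, (hsupp k).trans hδ⟩
    exact HasCompactSupport.contDiff_convolution_left L
      (bump k).hasCompactSupport_normed (bump k).contDiff_normed hψloc
  have hder : ∀ (k : ℕ) (β : Fin n), pd β (ψk k) =
      fun x => ((bump k).normed volume ⋆[L, volume] pd β ψ) x := by
    intro k β
    funext x
    have H := HasCompactSupport.hasFDerivAt_convolution_right L hcs
      (((bump k).integrable_normed (μ := volume)).locallyIntegrable) hψ x
    have hfd : fderiv ℝ (ψk k) x
        = ((bump k).normed volume ⋆[L.precompR (Euc n), volume] fderiv ℝ ψ) x := H.fderiv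
    show fderiv ℝ (ψk k) x (EuclideanSpace.single β 1) = _
    rw [hfd, convolution_precompR_apply L (((bump k).integrable_normed (μ := volume)).locallyIntegrable)
      (hcs.fderiv ℝ) (hψ.continuous_fderiv one_ne_zero)]
    rfl
  obtain ⟨C0, hC0⟩ := hcs.exists_bound_of_continuous hψcont
  have hpdcont : ∀ β : Fin n, Continuous (pd β ψ) := by
    intro β
    exact ((ContinuousLinearMap.apply ℝ ℝ (EuclideanSpace.single β 1)).continuous).comp
      (hψ.continuous_fderiv one_ne_zero)
  have hpdcs : ∀ β : Fin n, HasCompactSupport (pd β ψ) := by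
    intro β
    refine HasCompactSupport.intro hKc ?_
    intro x hx
    have h0 : fderiv ℝ ψ x = 0 := by
      by_contra h
      exact hx (support_fderiv_subset ℝ (by simpa [Function.mem_support] using h))
    show fderiv ℝ ψ x (EuclideanSpace.single β 1) = 0
    rw [h0]; rfl
  have hlim1 : Tendsto (fun k => sInt (T.divA α) (ψk k)) atTop (𝓝 (sInt (T.divA α) ψ)) := by
    refine sInt_tendsto _ (fun k => ((htest k).1).continuous)
      (fun k x => conv_bound (bump k) hC0 x)
      (fun x => ContDiffBump.convolution_tendsto_right_of_continuous hbout hψcont x)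
  have hlim2 : ∀ β : Fin n, Tendsto (fun k => sInt (T.A α β) (pd β (ψk k))) atTop
      (𝓝 (sInt (T.A α β) (pd β ψ))) := by
    intro β
    obtain ⟨Cβ, hCβ⟩ := (hpdcs β).exists_bound_of_continuous (hpdcont β)
    have hGc : ∀ k, Continuous fun x => ((bump k).normed volume ⋆[L, volume] pd β ψ) x := by
      intro k
      exact (HasCompactSupport.contDiff_convolution_left L (bump k).hasCompactSupport_normed
        ((bump k).contDiff_normed (n := ⊤)) ((hpdcont β).locallyIntegrable)).continuous
    simp only [hder]
    exact sInt_tendsto _ hGc (fun k x => conv_bound (bump k) hCβ x)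
      (fun x => ContDiffBump.convolution_tendsto_right_of_continuous hbout (hpdcont β) x)
  have h1 : Tendsto (fun k => ∑ β, sInt (T.A α β) (pd β (ψk k))) atTop
      (𝓝 (∑ β, sInt (T.A α β) (pd β ψ))) := tendsto_finset_sum _ (fun β _ => hlim2 β)
  have h2 : Tendsto (fun k => ∑ β, sInt (T.A α β) (pd β (ψk k))) atTop
      (𝓝 (- sInt (T.divA α) ψ)) := by
    have : ∀ k, ∑ β, sInt (T.A α β) (pd β (ψk k)) = - sInt (T.divA α) (ψk k) :=
      fun k => T.weak α (ψk k) (htest k)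
    simp only [this]
    exact hlim1.neg
  exact tendsto_nhds_unique h1 h2


end Stmt6Aux

/-- Lemma 2.1 of the paper: formula for the distributional divergence of
the push-forward tensor `φ_*A`, namely
`⟨Div (φ_*A), Y⟩_V = ⟨(Div A) dφ + A : D²φ, Y ∘ φ⟩_ω` for every test field `Y ∈ D(V; ℝⁿ)`. -/
theorem stmt6 (n : ℕ) (ω V : Set (Euc n)) (hω : IsOpen ω) (hV : IsOpen V)
    (φ φinv : Euc n → Euc n)
    (hφ : ContDiffOn ℝ 2 φ ω) (hbij : Set.BijOn φ ω V)
    (hφinv : ContDiffOn ℝ 2 φinv V) (hleft : ∀ x ∈ ω, φinv (φ x) = x)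
    (hright : ∀ y ∈ V, φ (φinv y) = y)
    (T : DivBV n ω)
    (Y : Fin n → Euc n → ℝ) (hY : ∀ i, IsTestFun V (Y i)) :
    -(∑ i, ∑ j, ∑ α, ∑ β, sInt (T.A α β)
        (fun x => dcomp φ i α x * dcomp φ j β x * pd j (Y i) (φ x))) =
    ∑ i, ((∑ α, sInt (T.divA α) (fun x => dcomp φ i α x * Y i (φ x))) +
      ∑ α, ∑ β, sInt (T.A α β) (fun x => d2comp φ i α β x * Y i (φ x))) := by
  classical
  have hYsm : ∀ i, ContDiff ℝ (⊤ : ℕ∞) (Y i) := fun i => (hY i).1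
  have hYcs : ∀ i, HasCompactSupport (Y i) := fun i => (hY i).2.1
  have hYts : ∀ i, tsupport (Y i) ⊆ V := fun i => (hY i).2.2
  set K : Set (Euc n) := φinv '' (⋃ i, tsupport (Y i)) with hKdef
  have hUc : IsCompact (⋃ i, tsupport (Y i)) := isCompact_iUnion (fun i => hYcs i)
  have hUV : (⋃ i, tsupport (Y i)) ⊆ V := Set.iUnion_subset hYts
  have hKc : IsCompact K := hUc.image_of_continuousOn (hφinv.continuousOn.mono hUV)
  have hKω : K ⊆ ω := by
    rintro x ⟨y, hy, rfl⟩
    obtain ⟨x', hx', rfl⟩ := hbij.surjOn (hUV hy)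
    rw [hleft x' hx']
    exact hx'
  have hout : ∀ (i : Fin n), ∀ x ∈ ω \ K, φ x ∉ tsupport (Y i) := by
    rintro i x ⟨hxω, hxK⟩ hmem
    exact hxK ⟨φ x, Set.mem_iUnion.2 ⟨i, hmem⟩, hleft x hxω⟩
  have hYout : ∀ (i : Fin n), ∀ x ∈ ω \ K, Y i (φ x) = 0 :=
    fun i x hx => image_eq_zero_of_notMem_tsupport (hout i x hx)
  have hpdYout : ∀ (i j : Fin n), ∀ x ∈ ω \ K, pd j (Y i) (φ x) = 0 := by
    intro i j x hx
    have h0 : fderiv ℝ (Y i) (φ x) = 0 := by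
      by_contra h
      exact hout i x hx (support_fderiv_subset ℝ (by simpa [Function.mem_support] using h))
    show fderiv ℝ (Y i) (φ x) _ = 0
    rw [h0]
    rfl
  -- continuity facts
  have hφcont : ContinuousOn φ ω := hφ.continuousOn
  have hdφc : ContinuousOn (fderiv ℝ φ) ω := hφ.continuousOn_fderiv_of_isOpen hω (by norm_num)
  have hφ' : ContDiffOn ℝ 1 (fderiv ℝ φ) ω := hφ.fderiv_of_isOpen hω (by norm_num)
  have hd2φc : ContinuousOn (fderiv ℝ (fderiv ℝ φ)) ω :=
    hφ'.continuousOn_fderiv_of_isOpen hω le_rfl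
  have hdcompc : ∀ i α : Fin n, ContinuousOn (dcomp φ i α) ω := by
    intro i α
    have h : dcomp φ i α = fun x => (EuclideanSpace.proj i : Euc n →L[ℝ] ℝ)
        ((ContinuousLinearMap.apply ℝ (Euc n) (EuclideanSpace.single α 1)) (fderiv ℝ φ x)) := rfl
    rw [h]
    exact ((EuclideanSpace.proj i).continuous.comp
      (ContinuousLinearMap.apply ℝ (Euc n)
        (EuclideanSpace.single α 1)).continuous).comp_continuousOn hdφc
  have hd2compc : ∀ i α β : Fin n, ContinuousOn (d2comp φ i α β) ω := by
    intro i α β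
    have h : d2comp φ i α β = fun x => (EuclideanSpace.proj i : Euc n →L[ℝ] ℝ)
        ((ContinuousLinearMap.apply ℝ (Euc n) (EuclideanSpace.single β 1))
          ((ContinuousLinearMap.apply ℝ (Euc n →L[ℝ] Euc n) (EuclideanSpace.single α 1))
            (fderiv ℝ (fderiv ℝ φ) x))) := rfl
    rw [h]
    exact (((EuclideanSpace.proj i).continuous.comp
      (ContinuousLinearMap.apply ℝ (Euc n) (EuclideanSpace.single β 1)).continuous).comp
        (ContinuousLinearMap.apply ℝ (Euc n →L[ℝ] Euc n)
          (EuclideanSpace.single α 1)).continuous).comp_continuousOn hd2φc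
  have hYφc : ∀ i : Fin n, ContinuousOn (fun x => Y i (φ x)) ω :=
    fun i => ((hYsm i).continuous).comp_continuousOn hφcont
  have hpdYc : ∀ i j : Fin n, Continuous (pd j (Y i)) := by
    intro i j
    exact ((ContinuousLinearMap.apply ℝ ℝ (EuclideanSpace.single j 1)).continuous).comp
      ((hYsm i).continuous_fderiv (by simp))
  have hpdYφc : ∀ i j : Fin n, ContinuousOn (fun x => pd j (Y i) (φ x)) ω :=
    fun i j => (hpdYc i j).comp_continuousOn hφcont
  -- integrability machinery
  have hInt : ∀ h : Euc n → ℝ, ContinuousOn h ω → (∀ x ∈ ω \ K, h x = 0) →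
      ∀ μ : MeasureTheory.SignedMeasure (Euc n), SuppOn μ ω →
      Integrable h μ.toJordanDecomposition.posPart ∧
        Integrable h μ.toJordanDecomposition.negPart := by
    intro h hc hz μ hμ
    obtain ⟨h1, h2⟩ := Stmt6Aux.parts_null hμ hω.measurableSet
    exact ⟨Stmt6Aux.integrable_of_concentrated hω.measurableSet h1 hc hKc hKω hz,
      Stmt6Aux.integrable_of_concentrated hω.measurableSet h2 hc hKc hKω hz⟩
  -- cutoff function
  obtain ⟨δ, δpos, hδ⟩ := hKc.exists_cthickening_subset_open hω hKω
  have hKint : K ⊆ interior (cthickening δ K) :=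
    fun x hx => interior_maximal (Metric.thickening_subset_cthickening δ K)
      Metric.isOpen_thickening (Metric.self_subset_thickening δpos K hx)
  obtain ⟨χ₀, hχ1, hχ0, hχmem⟩ :=
    exists_contMDiffMap_one_nhds_of_subset_interior 𝓘(ℝ, Euc n) (n := (⊤ : ℕ∞)) hKc.isClosed hKint
  set χ : Euc n → ℝ := ⇑χ₀ with hχdef
  have hχsm : ContDiff ℝ (⊤ : ℕ∞) χ := contMDiff_iff_contDiff.1 χ₀.contMDiff
  obtain ⟨O₁, hO₁open, hKO₁, hχO₁⟩ := eventually_nhdsSet_iff_exists.1 hχ1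
  have hχsuppsub : Function.support χ ⊆ cthickening δ K := by
    intro x hx
    by_contra hxc
    exact hx (hχ0 x hxc)
  have hχts : tsupport χ ⊆ cthickening δ K := closure_minimal hχsuppsub isClosed_cthickening
  have hχsupp : tsupport χ ⊆ ω := hχts.trans hδ
  have hχcs : HasCompactSupport χ :=
    IsCompact.of_isClosed_subset (hKc.cthickening) (isClosed_tsupport _) hχts
  -- the key per-(i, α) identity
  have key : ∀ i α : Fin n,
      sInt (T.divA α) (fun x => dcomp φ i α x * Y i (φ x)) =
      - ∑ β, (sInt (T.A α β) (fun x => d2comp φ i β α x * Y i (φ x))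
        + ∑ j, sInt (T.A α β) (fun x => dcomp φ i α x * dcomp φ j β x * pd j (Y i) (φ x))) := by
    intro i α
    -- the C¹ test function g
    have hgC1 : ContDiff ℝ 1 (fun x => χ x * (dcomp φ i α x * Y i (φ x))) := by
      rw [contDiff_iff_contDiffAt]
      intro x
      by_cases hx : x ∈ ω
      · have hχat : ContDiffAt ℝ 1 χ x := (hχsm.of_le (by exact_mod_cast le_top)).contDiffAt
        have hφat : ContDiffAt ℝ 2 φ x := hφ.contDiffAt (hω.mem_nhds hx)
        have hdat : ContDiffAt ℝ 1 (fderiv ℝ φ) x := hφat.fderiv_right (by norm_num)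
        have hu : ContDiffAt ℝ 1 (dcomp φ i α) x := by
          have h : dcomp φ i α = fun y => ((EuclideanSpace.proj i).comp
              (ContinuousLinearMap.apply ℝ (Euc n) (EuclideanSpace.single α 1)))
                (fderiv ℝ φ y) := rfl
          rw [h]
          exact (((EuclideanSpace.proj i).comp (ContinuousLinearMap.apply ℝ (Euc n)
            (EuclideanSpace.single α 1))).contDiff.contDiffAt).comp x hdat
        have hv : ContDiffAt ℝ 1 (fun y => Y i (φ y)) x :=
          (((hYsm i).of_le (by exact_mod_cast le_top)).contDiffAt).comp x
            (hφat.of_le (by norm_num))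
        exact hχat.mul (hu.mul hv)
      · have hnb : (tsupport χ)ᶜ ∈ 𝓝 x :=
          (isClosed_tsupport χ).isOpen_compl.mem_nhds (fun hc => hx (hχsupp hc))
        refine (contDiffAt_const (c := 0)).congr_of_eventuallyEq ?_
        filter_upwards [hnb] with y hy
        rw [image_eq_zero_of_notMem_tsupport hy, zero_mul]
    have hgcs : HasCompactSupport (fun x => χ x * (dcomp φ i α x * Y i (φ x))) := by
      refine IsCompact.of_isClosed_subset (hKc.cthickening (r := δ)) (isClosed_tsupport _) ?_
      refine closure_minimal ?_ isClosed_cthickening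
      intro x hx
      refine hχsuppsub ?_
      intro h0
      apply hx
      show χ x * (dcomp φ i α x * Y i (φ x)) = 0
      rw [h0, zero_mul]
    have hgts : tsupport (fun x => χ x * (dcomp φ i α x * Y i (φ x))) ⊆ ω := by
      refine Subset.trans ?_ hχsupp
      refine closure_mono ?_
      intro x hx
      intro h0
      apply hx
      show χ x * (dcomp φ i α x * Y i (φ x)) = 0
      rw [h0, zero_mul]
    have hweak := Stmt6Aux.weakC1 hω T α hgC1 hgcs hgts
    -- g = f0 on ω
    have hgf0 : Set.EqOn (fun x => χ x * (dcomp φ i α x * Y i (φ x)))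
        (fun x => dcomp φ i α x * Y i (φ x)) ω := by
      intro x hx
      by_cases hxK : x ∈ K
      · show χ x * _ = _
        rw [hχO₁ x (hKO₁ hxK), one_mul]
      · show χ x * (dcomp φ i α x * Y i (φ x)) = dcomp φ i α x * Y i (φ x)
        rw [hYout i x ⟨hx, hxK⟩, mul_zero, mul_zero]
    -- the derivative identity on ω
    have hpdg : ∀ β : Fin n, Set.EqOn (pd β (fun x => χ x * (dcomp φ i α x * Y i (φ x))))
        (fun x => d2comp φ i β α x * Y i (φ x)
          + ∑ j, dcomp φ i α x * dcomp φ j β x * pd j (Y i) (φ x)) ω := by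
      intro β x hx
      by_cases hxK : x ∈ K
      · have hφat : ContDiffAt ℝ 2 φ x := hφ.contDiffAt (hω.mem_nhds hx)
        have hφd : HasFDerivAt φ (fderiv ℝ φ x) x :=
          (hφat.differentiableAt (by norm_num)).hasFDerivAt
        have hfd2 : HasFDerivAt (fderiv ℝ φ) (fderiv ℝ (fderiv ℝ φ) x) x :=
          ((hφat.fderiv_right (m := 1) (by norm_num)).differentiableAt one_ne_zero).hasFDerivAt
        have hu0 := (((EuclideanSpace.proj i).comp (ContinuousLinearMap.apply ℝ (Euc n)
            (EuclideanSpace.single α 1))).hasFDerivAt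
              (x := fderiv ℝ φ x)).comp x hfd2
        have hu : HasFDerivAt (fun y => dcomp φ i α y)
            (((EuclideanSpace.proj i).comp (ContinuousLinearMap.apply ℝ (Euc n)
              (EuclideanSpace.single α 1))).comp (fderiv ℝ (fderiv ℝ φ) x)) x := hu0
        have hYd : HasFDerivAt (Y i) (fderiv ℝ (Y i) (φ x)) (φ x) :=
          (((hYsm i).contDiffAt).differentiableAt (by simp)).hasFDerivAt
        have hv : HasFDerivAt (fun y => Y i (φ y))
            ((fderiv ℝ (Y i) (φ x)).comp (fderiv ℝ φ x)) x := hYd.comp x hφd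
        have hprod : HasFDerivAt (fun y => dcomp φ i α y * Y i (φ y)) _ x := hu.mul hv
        have hevq : (fun y => χ y * (dcomp φ i α y * Y i (φ y)))
            =ᶠ[𝓝 x] fun y => dcomp φ i α y * Y i (φ y) := by
          filter_upwards [hO₁open.mem_nhds (hKO₁ hxK)] with y hy
          rw [hχO₁ y hy, one_mul]
        have h1 : pd β (fun y => χ y * (dcomp φ i α y * Y i (φ y))) x
            = fderiv ℝ (fun y => dcomp φ i α y * Y i (φ y)) x (EuclideanSpace.single β 1) := by
          show fderiv ℝ _ x _ = _
          rw [hevq.fderiv_eq]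
        rw [h1, hprod.fderiv]
        simp only [ContinuousLinearMap.add_apply, ContinuousLinearMap.smul_apply,
          ContinuousLinearMap.coe_comp', Function.comp_apply, smul_eq_mul]
        rw [Stmt6Aux.clm_apply_sum (fderiv ℝ (Y i) (φ x))
          (fderiv ℝ φ x (EuclideanSpace.single β 1)), Finset.mul_sum]
        have h2 : (EuclideanSpace.proj i) ((ContinuousLinearMap.apply ℝ (Euc n)
            (EuclideanSpace.single α 1)) ((fderiv ℝ (fderiv ℝ φ) x) (EuclideanSpace.single β 1)))
            = d2comp φ i β α x := rfl
        rw [h2]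
        have h3 : ∀ j : Fin n, dcomp φ i α x * (fderiv ℝ φ x (EuclideanSpace.single β 1) j
            * fderiv ℝ (Y i) (φ x) (EuclideanSpace.single j 1))
            = dcomp φ i α x * dcomp φ j β x * pd j (Y i) (φ x) := by
          intro j
          show dcomp φ i α x * (dcomp φ j β x * pd j (Y i) (φ x)) = _
          ring
        rw [Finset.sum_congr rfl (fun j _ => h3 j)]
        ring
      · have hz : ∀ j, pd j (Y i) (φ x) = 0 := fun j => hpdYout i j x ⟨hx, hxK⟩
        have hy0 : Y i (φ x) = 0 := hYout i x ⟨hx, hxK⟩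
        have hU : IsOpen (ω ∩ φ ⁻¹' (tsupport (Y i))ᶜ) :=
          hφcont.isOpen_inter_preimage hω (isClosed_tsupport _).isOpen_compl
        have hxU : x ∈ ω ∩ φ ⁻¹' (tsupport (Y i))ᶜ := ⟨hx, hout i x ⟨hx, hxK⟩⟩
        have hg0 : (fun y => χ y * (dcomp φ i α y * Y i (φ y))) =ᶠ[𝓝 x] fun _ => (0 : ℝ) := by
          filter_upwards [hU.mem_nhds hxU] with y hy
          rw [image_eq_zero_of_notMem_tsupport hy.2, mul_zero, mul_zero]
        have h0 : pd β (fun y => χ y * (dcomp φ i α y * Y i (φ y))) x = 0 := by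
          show fderiv ℝ _ x _ = 0
          rw [hg0.fderiv_eq]
          simp
        rw [h0]
        have hzz : ∀ j : Fin n, dcomp φ i α x * dcomp φ j β x * pd j (Y i) (φ x) = 0 :=
          fun j => by rw [hz j, mul_zero]
        show (0 : ℝ) = d2comp φ i β α x * Y i (φ x)
          + ∑ j, dcomp φ i α x * dcomp φ j β x * pd j (Y i) (φ x)
        rw [hy0, mul_zero, Finset.sum_eq_zero (fun j _ => hzz j), add_zero]
    -- integrability
    have hI1 : ∀ β : Fin n,
        Integrable (fun x => d2comp φ i β α x * Y i (φ x))
          (T.A α β).toJordanDecomposition.posPart ∧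
        Integrable (fun x => d2comp φ i β α x * Y i (φ x))
          (T.A α β).toJordanDecomposition.negPart :=
      fun β => hInt _ ((hd2compc i β α).mul (hYφc i))
        (fun x hx => by simp only [Pi.mul_apply]; rw [hYout i x hx, mul_zero]) _ (T.suppA α β)
    have hI2 : ∀ β j : Fin n,
        Integrable (fun x => dcomp φ i α x * dcomp φ j β x * pd j (Y i) (φ x))
          (T.A α β).toJordanDecomposition.posPart ∧
        Integrable (fun x => dcomp φ i α x * dcomp φ j β x * pd j (Y i) (φ x))
          (T.A α β).toJordanDecomposition.negPart :=
      fun β j => hInt _ (((hdcompc i α).mul (hdcompc j β)).mul (hpdYφc i j))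
        (fun x hx => by simp only [Pi.mul_apply]; rw [hpdYout i j x hx, mul_zero]) _ (T.suppA α β)
    have hI3 : ∀ β : Fin n,
        Integrable (fun x => ∑ j, dcomp φ i α x * dcomp φ j β x * pd j (Y i) (φ x))
          (T.A α β).toJordanDecomposition.posPart ∧
        Integrable (fun x => ∑ j, dcomp φ i α x * dcomp φ j β x * pd j (Y i) (φ x))
          (T.A α β).toJordanDecomposition.negPart :=
      fun β => ⟨integrable_finset_sum _ (fun j _ => (hI2 β j).1),
        integrable_finset_sum _ (fun j _ => (hI2 β j).2)⟩
    -- split each term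
    have hsplit : ∀ β : Fin n,
        sInt (T.A α β) (pd β (fun x => χ x * (dcomp φ i α x * Y i (φ x))))
        = sInt (T.A α β) (fun x => d2comp φ i β α x * Y i (φ x))
          + ∑ j, sInt (T.A α β) (fun x => dcomp φ i α x * dcomp φ j β x * pd j (Y i) (φ x)) := by
      intro β
      rw [Stmt6Aux.sInt_congr (T.suppA α β) hω.measurableSet (hpdg β)]
      rw [Stmt6Aux.sInt_add (hI1 β).1 (hI1 β).2 (hI3 β).1 (hI3 β).2]
      rw [Stmt6Aux.sInt_finsum (fun j => (hI2 β j).1) (fun j => (hI2 β j).2)]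
    have e1 : sInt (T.divA α) (fun x => χ x * (dcomp φ i α x * Y i (φ x)))
        = sInt (T.divA α) (fun x => dcomp φ i α x * Y i (φ x)) :=
      Stmt6Aux.sInt_congr (T.suppDiv α) hω.measurableSet hgf0
    rw [Finset.sum_congr rfl (fun β _ => hsplit β), e1] at hweak
    linarith [hweak]
  -- final rearrangement
  have hsum : ∀ i : Fin n,
      (∑ α, sInt (T.divA α) (fun x => dcomp φ i α x * Y i (φ x)))
        + ∑ α, ∑ β, sInt (T.A α β) (fun x => d2comp φ i α β x * Y i (φ x))
      = - ∑ α, ∑ β, ∑ j, sInt (T.A α β)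
          (fun x => dcomp φ i α x * dcomp φ j β x * pd j (Y i) (φ x)) := by
    intro i
    have h1 : ∑ α, sInt (T.divA α) (fun x => dcomp φ i α x * Y i (φ x))
        = - ∑ α, ∑ β, (sInt (T.A α β) (fun x => d2comp φ i β α x * Y i (φ x))
            + ∑ j, sInt (T.A α β)
              (fun x => dcomp φ i α x * dcomp φ j β x * pd j (Y i) (φ x))) := by
      rw [Finset.sum_congr rfl (fun α _ => key i α)]
      rw [Finset.sum_neg_distrib]
    have h2 : ∑ α, ∑ β, (sInt (T.A α β) (fun x => d2comp φ i β α x * Y i (φ x))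
            + ∑ j, sInt (T.A α β)
              (fun x => dcomp φ i α x * dcomp φ j β x * pd j (Y i) (φ x)))
        = (∑ α, ∑ β, sInt (T.A α β) (fun x => d2comp φ i β α x * Y i (φ x)))
          + ∑ α, ∑ β, ∑ j, sInt (T.A α β)
              (fun x => dcomp φ i α x * dcomp φ j β x * pd j (Y i) (φ x)) := by
      rw [← Finset.sum_add_distrib]
      exact Finset.sum_congr rfl (fun α _ => Finset.sum_add_distrib)
    have hsymm : ∑ α, ∑ β, sInt (T.A α β) (fun x => d2comp φ i β α x * Y i (φ x))
        = ∑ α, ∑ β, sInt (T.A α β) (fun x => d2comp φ i α β x * Y i (φ x)) := by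
      have hstep : ∀ a b : Fin n, sInt (T.A a b) (fun x => d2comp φ i b a x * Y i (φ x))
          = sInt (T.A b a) (fun x => d2comp φ i b a x * Y i (φ x)) := fun a b => by
        rw [T.symm a b]
      rw [Finset.sum_congr rfl (fun a _ => Finset.sum_congr rfl (fun b _ => hstep a b))]
      exact Finset.sum_comm
    rw [h1, h2, hsymm]
    ring
  have hcomm : ∀ i : Fin n,
      ∑ j, ∑ α, ∑ β, sInt (T.A α β)
        (fun x => dcomp φ i α x * dcomp φ j β x * pd j (Y i) (φ x))
      = ∑ α, ∑ β, ∑ j, sInt (T.A α β)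
        (fun x => dcomp φ i α x * dcomp φ j β x * pd j (Y i) (φ x)) := by
    intro i
    rw [Finset.sum_comm]
    exact Finset.sum_congr rfl (fun α _ => Finset.sum_comm)
  calc -(∑ i, ∑ j, ∑ α, ∑ β, sInt (T.A α β)
        (fun x => dcomp φ i α x * dcomp φ j β x * pd j (Y i) (φ x)))
      = -(∑ i, ∑ α, ∑ β, ∑ j, sInt (T.A α β)
        (fun x => dcomp φ i α x * dcomp φ j β x * pd j (Y i) (φ x))) := by
        rw [Finset.sum_congr rfl (fun i _ => hcomm i)]
    _ = ∑ i, -(∑ α, ∑ β, ∑ j, sInt (T.A α β)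
        (fun x => dcomp φ i α x * dcomp φ j β x * pd j (Y i) (φ x))) := by
        rw [← Finset.sum_neg_distrib]
    _ = ∑ i, ((∑ α, sInt (T.divA α) (fun x => dcomp φ i α x * Y i (φ x))) +
      ∑ α, ∑ β, sInt (T.A α β) (fun x => d2comp φ i α β x * Y i (φ x))) :=
        Finset.sum_congr rfl (fun i _ => (hsum i).symm)


end
end

section
/- Let U ⊂ ℝⁿ be a bounded open domain with C¹ boundary. For every vector field q⃗ ∈ divBV(U) and every function f ∈ C¹(Ū), the vector field f q⃗ belongs to divBV(U) and its normal trace satisfies γ_ν(f q⃗) = f · γ_ν q⃗ as elements of (C¹(∂U))', i.e. ⟨γ_ν(f q⃗), Y⟩ = ⟨γ_ν q⃗, f Y⟩ for all Y ∈ C¹(∂U). -/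
open MeasureTheory Metric Set Filter Topology
open scoped Pointwise ENNReal NNReal

noncomputable section

section stmt14helpers

open scoped Convolution

lemma s14_intg {n : ℕ} (μ : MeasureTheory.Measure (Euc n)) [IsFiniteMeasure μ] {g : Euc n → ℝ}
    (hg : Continuous g) (hcs : HasCompactSupport g) : Integrable g μ := by
  haveI : IsFiniteMeasureOnCompacts μ :=
    ⟨fun s _ => lt_of_le_of_lt (measure_mono (Set.subset_univ s)) (measure_lt_top _ _)⟩
  exact hg.integrable_of_hasCompactSupport hcs

lemma s14_sInt_add {n : ℕ} (μ : MeasureTheory.SignedMeasure (Euc n)) {a b : Euc n → ℝ}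
    (ha : Continuous a) (hacs : HasCompactSupport a)
    (hb : Continuous b) (hbcs : HasCompactSupport b) :
    sInt μ (fun x => a x + b x) = sInt μ a + sInt μ b := by
  unfold sInt
  rw [integral_add (s14_intg _ ha hacs) (s14_intg _ hb hbcs),
    integral_add (s14_intg _ ha hacs) (s14_intg _ hb hbcs)]
  ring

lemma s14_suppOn_jordan {n : ℕ} {μ : MeasureTheory.SignedMeasure (Euc n)} {U : Set (Euc n)}
    (h : SuppOn μ U) {t : Set (Euc n)} (ht : MeasurableSet t) (htU : t ∩ U = ∅) :
    μ.toJordanDecomposition.posPart t = 0 ∧ μ.toJordanDecomposition.negPart t = 0 := by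
  obtain ⟨i, hi₁, hi₂, hi₃, hp, hn⟩ := μ.toJordanDecomposition_spec
  constructor
  · rw [hp, MeasureTheory.SignedMeasure.toMeasureOfZeroLE_apply _ hi₂ hi₁ ht]
    have : μ (i ∩ t) = 0 := h _ (hi₁.inter ht) (by
      apply Set.eq_empty_of_subset_empty; rw [← htU]
      exact Set.inter_subset_inter_left _ Set.inter_subset_right)
    simp [this]
  · rw [hn, MeasureTheory.SignedMeasure.toMeasureOfLEZero_apply _ hi₃ hi₁.compl ht]
    have : μ (iᶜ ∩ t) = 0 := h _ (hi₁.compl.inter ht) (by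
      apply Set.eq_empty_of_subset_empty; rw [← htU]
      exact Set.inter_subset_inter_left _ Set.inter_subset_right)
    simp [this]

lemma s14_sInt_eq_of_jordan_like {n : ℕ} (μ : MeasureTheory.SignedMeasure (Euc n))
    (P N : MeasureTheory.Measure (Euc n)) [IsFiniteMeasure P] [IsFiniteMeasure N]
    (h : μ = P.toSignedMeasure - N.toSignedMeasure)
    {g : Euc n → ℝ} (hg : Continuous g) (hcs : HasCompactSupport g) :
    sInt μ g = ∫ x, g x ∂P - ∫ x, g x ∂N := by
  have hm : μ.toJordanDecomposition.posPart + N = μ.toJordanDecomposition.negPart + P := by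
    ext s hs
    have h1 : μ s = (P s).toReal - (N s).toReal := by
      rw [h, MeasureTheory.VectorMeasure.sub_apply,
        MeasureTheory.Measure.toSignedMeasure_apply_measurable hs,
        MeasureTheory.Measure.toSignedMeasure_apply_measurable hs]
      simp only [MeasureTheory.measureReal_def]
    have h2 : μ s = (μ.toJordanDecomposition.posPart s).toReal -
        (μ.toJordanDecomposition.negPart s).toReal := by
      conv_lhs => rw [← μ.toSignedMeasure_toJordanDecomposition]
      rw [MeasureTheory.JordanDecomposition.toSignedMeasure,
        MeasureTheory.VectorMeasure.sub_apply,
        MeasureTheory.Measure.toSignedMeasure_apply_measurable hs,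
        MeasureTheory.Measure.toSignedMeasure_apply_measurable hs]
      simp only [MeasureTheory.measureReal_def]
    rw [MeasureTheory.Measure.add_apply, MeasureTheory.Measure.add_apply]
    have e1 : (μ.toJordanDecomposition.posPart s).toReal + (N s).toReal =
        (μ.toJordanDecomposition.negPart s).toReal + (P s).toReal := by
      rw [h2] at h1; linarith
    rw [← ENNReal.toReal_eq_toReal_iff' (by finiteness) (by finiteness),
      ENNReal.toReal_add (by finiteness) (by finiteness),
      ENNReal.toReal_add (by finiteness) (by finiteness)]
    exact e1
  have e : ∫ x, g x ∂(μ.toJordanDecomposition.posPart + N) =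
      ∫ x, g x ∂(μ.toJordanDecomposition.negPart + P) := by rw [hm]
  rw [integral_add_measure (s14_intg _ hg hcs) (s14_intg _ hg hcs),
    integral_add_measure (s14_intg _ hg hcs) (s14_intg _ hg hcs)] at e
  unfold sInt
  linarith

def smass {α : Type*} [MeasurableSpace α] (μ : MeasureTheory.SignedMeasure α) : ℝ :=
  (μ.toJordanDecomposition.posPart Set.univ).toReal +
    (μ.toJordanDecomposition.negPart Set.univ).toReal

lemma smass_nonneg {α : Type*} [MeasurableSpace α] (μ : MeasureTheory.SignedMeasure α) :
    0 ≤ smass μ := by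
  unfold smass; positivity

lemma s14_sInt_dist {n : ℕ} (μ : MeasureTheory.SignedMeasure (Euc n)) {a b : Euc n → ℝ}
    (ha : Continuous a) (hacs : HasCompactSupport a)
    (hb : Continuous b) (hbcs : HasCompactSupport b)
    {C : ℝ} (hab : ∀ x, |a x - b x| ≤ C) :
    |sInt μ a - sInt μ b| ≤ smass μ * C := by
  have key : ∀ ν : MeasureTheory.Measure (Euc n), ∀ _ : IsFiniteMeasure ν,
      |∫ x, a x ∂ν - ∫ x, b x ∂ν| ≤ (ν Set.univ).toReal * C := by
    intro ν hν
    rw [← integral_sub (s14_intg ν ha hacs) (s14_intg ν hb hbcs)]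
    have := norm_integral_le_of_norm_le_const (μ := ν) (f := fun x => a x - b x)
      (C := C) (Filter.Eventually.of_forall fun x => by simpa using hab x)
    simpa [Real.norm_eq_abs, mul_comm, Measure.real] using this
  have h1 := key μ.toJordanDecomposition.posPart inferInstance
  have h2 := key μ.toJordanDecomposition.negPart inferInstance
  unfold sInt smass
  have heq : ∫ x, a x ∂μ.toJordanDecomposition.posPart -
      ∫ x, a x ∂μ.toJordanDecomposition.negPart -
      (∫ x, b x ∂μ.toJordanDecomposition.posPart -
        ∫ x, b x ∂μ.toJordanDecomposition.negPart)
      = (∫ x, a x ∂μ.toJordanDecomposition.posPart -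
          ∫ x, b x ∂μ.toJordanDecomposition.posPart)
      - (∫ x, a x ∂μ.toJordanDecomposition.negPart -
          ∫ x, b x ∂μ.toJordanDecomposition.negPart) := by ring
  rw [heq]
  calc _ ≤ |∫ x, a x ∂μ.toJordanDecomposition.posPart -
        ∫ x, b x ∂μ.toJordanDecomposition.posPart|
      + |∫ x, a x ∂μ.toJordanDecomposition.negPart -
        ∫ x, b x ∂μ.toJordanDecomposition.negPart| := abs_sub _ _
    _ ≤ _ := by rw [add_mul]; exact add_le_add h1 h2

lemma s14_integral_wd {n : ℕ} (μ : MeasureTheory.Measure (Euc n)) {g : Euc n → ℝ}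
    (hg : Continuous g) (h : Euc n → ℝ) :
    ∫ x, h x ∂(μ.withDensity fun x => ENNReal.ofReal (g x)) =
      ∫ x, max (g x) 0 * h x ∂μ := by
  have hmeas : Measurable fun x => (g x).toNNReal := hg.measurable.real_toNNReal
  have hrw : (fun x => ENNReal.ofReal (g x)) = fun x => ((g x).toNNReal : ℝ≥0∞) := rfl
  rw [hrw, integral_withDensity_eq_integral_smul hmeas]
  simp only [NNReal.smul_def, smul_eq_mul, Real.coe_toNNReal']

lemma s14_isFiniteMeasure_wd {n : ℕ} (μ : MeasureTheory.Measure (Euc n)) [IsFiniteMeasure μ]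
    {C : Set (Euc n)} (hCm : MeasurableSet C) (hC0 : μ Cᶜ = 0) {g : Euc n → ℝ}
    {M : ℝ} (hM : ∀ x ∈ C, g x ≤ M) :
    IsFiniteMeasure (μ.withDensity fun x => ENNReal.ofReal (g x)) := by
  constructor
  rw [MeasureTheory.withDensity_apply _ MeasurableSet.univ, MeasureTheory.Measure.restrict_univ]
  have hae : ∀ᵐ x ∂μ, x ∈ C := by
    rw [MeasureTheory.ae_iff]
    exact hC0
  conv_lhs => rw [← MeasureTheory.Measure.restrict_eq_self_of_ae_mem hae]
  calc ∫⁻ x, ENNReal.ofReal (g x) ∂(μ.restrict C)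
      ≤ ∫⁻ _, ENNReal.ofReal M ∂(μ.restrict C) := by
        refine lintegral_mono_ae (((ae_restrict_mem hCm)).mono fun x hx => ?_)
        exact ENNReal.ofReal_le_ofReal (hM x hx)
    _ = ENNReal.ofReal M * μ.restrict C Set.univ := by rw [lintegral_const]
    _ < ⊤ := by
        apply ENNReal.mul_lt_top ENNReal.ofReal_lt_top
        exact measure_lt_top _ _

lemma s14_isFiniteMeasure_sum {α ι : Type*} [MeasurableSpace α] (s : Finset ι)
    (μ : ι → MeasureTheory.Measure α) (h : ∀ i ∈ s, IsFiniteMeasure (μ i)) :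
    IsFiniteMeasure (∑ i ∈ s, μ i) := by
  constructor
  rw [MeasureTheory.Measure.finset_sum_apply]
  exact ENNReal.sum_lt_top.mpr fun i hi => (h i hi).measure_univ_lt_top

lemma s14_cont_pd {n : ℕ} {h : Euc n → ℝ} (hh : ContDiff ℝ 1 h) (j : Fin n) :
    Continuous (pd j h) := by
  have : Continuous (fderiv ℝ h) := hh.continuous_fderiv one_ne_zero
  exact (ContinuousLinearMap.apply ℝ ℝ (EuclideanSpace.single j 1)).continuous.comp this

lemma s14_hcs_pd {n : ℕ} {h : Euc n → ℝ} (hcs : HasCompactSupport h) (j : Fin n) :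
    HasCompactSupport (pd j h) := by
  have h1 : HasCompactSupport (fderiv ℝ h) := hcs.fderiv ℝ
  have heq : pd j h = (fun L : Euc n →L[ℝ] ℝ => L (EuclideanSpace.single j 1)) ∘ fderiv ℝ h := rfl
  rw [heq]
  exact h1.comp_left (by simp)

lemma s14_pd_mul {n : ℕ} {f Y : Euc n → ℝ} (hf : ContDiff ℝ 1 f) (hY : ContDiff ℝ 1 Y)
    (i : Fin n) (x : Euc n) :
    pd i (fun y => f y * Y y) x = f x * pd i Y x + pd i f x * Y x := by
  unfold pd
  rw [fderiv_fun_mul ((hf.differentiable one_ne_zero).differentiableAt)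
    ((hY.differentiable one_ne_zero).differentiableAt)]
  simp only [ContinuousLinearMap.add_apply, ContinuousLinearMap.coe_smul', Pi.smul_apply,
    smul_eq_mul]
  ring

set_option maxHeartbeats 2000000 in
lemma s14_weak_ext {n : ℕ} {U : Set (Euc n)} (hU : IsOpen U)
    (q : Fin n → MeasureTheory.SignedMeasure (Euc n)) (dq : MeasureTheory.SignedMeasure (Euc n))
    (hweak : ∀ ψ : Euc n → ℝ, IsTestFun U ψ → ∑ i, sInt (q i) (pd i ψ) = - sInt dq ψ)
    (h : Euc n → ℝ) (hh : ContDiff ℝ 1 h) (hcs : HasCompactSupport h)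
    (hsub : tsupport h ⊆ U) :
    ∑ i, sInt (q i) (pd i h) = - sInt dq h := by
  obtain ⟨δ, hδpos, hδ⟩ := hcs.exists_cthickening_subset_open hU hsub
  set X : ℝ := (∑ i, sInt (q i) (pd i h)) + sInt dq h with hX
  have key : ∀ η : ℝ, 0 < η → |X| ≤ η := by
    intro η hη
    set Mtot : ℝ := smass dq + ∑ i, smass (q i) with hMtot
    have hMtot0 : 0 ≤ Mtot :=
      add_nonneg (smass_nonneg _) (Finset.sum_nonneg fun i _ => smass_nonneg _)
    have h1p : (0:ℝ) < 1 + Mtot := by linarith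
    set η' : ℝ := η / (1 + Mtot) with hη'
    have hη'pos : 0 < η' := div_pos hη h1p
    have UC : ∀ g : Euc n → ℝ, Continuous g → HasCompactSupport g →
        ∃ ε > 0, ∀ x y : Euc n, dist y x < ε → |g y - g x| ≤ η' := by
      intro g hg hgcs
      have huc := hgcs.uniformContinuous_of_continuous hg
      rw [Metric.uniformContinuous_iff] at huc
      obtain ⟨ε, hε, H⟩ := huc η' hη'pos
      exact ⟨ε, hε, fun x y hxy => by
        have := H (a := y) (b := x) hxy
        rw [Real.dist_eq] at this; exact this.le⟩
    choose εi hεipos hεi using fun i : Fin n => UC (pd i h) (s14_cont_pd hh i) (s14_hcs_pd hcs i)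
    obtain ⟨εh, hεhpos, hεh⟩ := UC h hh.continuous hcs
    set S : Finset ℝ := insert εh (insert δ (Finset.image εi Finset.univ)) with hS
    have hSne : S.Nonempty := ⟨εh, by simp [hS]⟩
    set ε : ℝ := S.min' hSne with hε
    have hεpos : 0 < ε := by
      apply (Finset.lt_min'_iff S hSne).mpr
      intro y hy
      simp only [hS, Finset.mem_insert, Finset.mem_image, Finset.mem_univ, true_and] at hy
      rcases hy with rfl | rfl | ⟨i, rfl⟩
      · exact hεhpos
      · exact hδpos
      · exact hεipos i
    have hεδ : ε ≤ δ := Finset.min'_le _ _ (by simp [hS])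
    have hεh' : ε ≤ εh := Finset.min'_le _ _ (by simp [hS])
    have hεi' : ∀ i, ε ≤ εi i := fun i => Finset.min'_le _ _ (by
      simp only [hS, Finset.mem_insert, Finset.mem_image, Finset.mem_univ, true_and]
      exact Or.inr (Or.inr ⟨i, rfl⟩))
    set φ : ContDiffBump (0 : Euc n) := ⟨ε/2, ε, by positivity, by linarith⟩ with hφ
    set gε : Euc n → ℝ :=
      (φ.normed volume ⋆[ContinuousLinearMap.lsmul ℝ ℝ, volume] h) with hgε
    have hφc : HasCompactSupport (φ.normed volume) := φ.hasCompactSupport_normed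
    have hloc : LocallyIntegrable (φ.normed volume) volume :=
      φ.integrable_normed.locallyIntegrable
    have hsm : ContDiff ℝ (⊤ : ℕ∞) gε :=
      hφc.contDiff_convolution_left _ φ.contDiff_normed hh.continuous.locallyIntegrable
    have hcsg : HasCompactSupport gε := hφc.convolution _ hcs
    have hts : tsupport gε ⊆ U := by
      have hT : IsCompact (Metric.closedBall (0 : Euc n) ε + tsupport h) :=
        (isCompact_closedBall _ _).add hcs
      have h1 : Function.support gε ⊆ Metric.closedBall (0 : Euc n) ε + tsupport h := by
        refine (support_convolution_subset _).trans ?_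
        apply Set.add_subset_add _ subset_closure
        rw [φ.support_normed_eq]
        exact ball_subset_closedBall
      have h2 : tsupport gε ⊆ Metric.closedBall (0 : Euc n) ε + tsupport h :=
        closure_minimal h1 hT.isClosed
      refine h2.trans (Set.Subset.trans ?_ hδ)
      rintro x ⟨a, ha, b, hb, rfl⟩
      refine Metric.mem_cthickening_of_dist_le _ b δ _ hb ?_
      have hd : dist (a + b) b = ‖a‖ := by
        rw [dist_eq_norm]; simp
      rw [hd]
      exact le_trans (mem_closedBall_zero_iff.mp ha) hεδ
    have hpd : ∀ (i : Fin n) (x : Euc n), pd i gε x =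
        (φ.normed volume ⋆[ContinuousLinearMap.lsmul ℝ ℝ, volume] pd i h) x := by
      intro i x
      have H := hcs.hasFDerivAt_convolution_right (ContinuousLinearMap.lsmul ℝ ℝ) hloc hh x
      show fderiv ℝ gε x (EuclideanSpace.single i 1) = _
      rw [H.fderiv]
      exact convolution_precompR_apply _ hloc (hcs.fderiv ℝ)
        (hh.continuous_fderiv one_ne_zero) x (EuclideanSpace.single i 1)
    have hclose_h : ∀ x, |gε x - h x| ≤ η' := by
      intro x
      have := φ.dist_normed_convolution_le (μ := volume)
        hh.continuous.aestronglyMeasurable (x₀ := x) (ε := η') (fun y hy => by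
          rw [Real.dist_eq]
          exact hεh x y (lt_of_lt_of_le (Metric.mem_ball.mp hy) hεh'))
      rw [Real.dist_eq] at this
      exact this
    have hclose_pd : ∀ (i : Fin n) (x : Euc n), |pd i gε x - pd i h x| ≤ η' := by
      intro i x
      rw [hpd i x]
      have := φ.dist_normed_convolution_le (μ := volume)
        (s14_cont_pd hh i).aestronglyMeasurable (x₀ := x) (ε := η') (fun y hy => by
          rw [Real.dist_eq]
          exact hεi i x y (lt_of_lt_of_le (Metric.mem_ball.mp hy) (hεi' i)))
      rw [Real.dist_eq] at this
      exact this
    have hW := hweak gε ⟨hsm, hcsg, hts⟩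
    have hXeq : X = (∑ i, (sInt (q i) (pd i h) - sInt (q i) (pd i gε))) +
        (sInt dq h - sInt dq gε) := by
      rw [Finset.sum_sub_distrib]
      have hz : (∑ i, sInt (q i) (pd i gε)) + sInt dq gε = 0 := by rw [hW]; ring
      rw [hX]; linarith
    have hgεcont : Continuous gε := hsm.continuous
    have hbound : ∀ i : Fin n,
        |sInt (q i) (pd i h) - sInt (q i) (pd i gε)| ≤ smass (q i) * η' := fun i =>
      s14_sInt_dist _ (s14_cont_pd hh i) (s14_hcs_pd hcs i)
        (s14_cont_pd (hsm.of_le (by exact_mod_cast le_top)) i)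
        (s14_hcs_pd hcsg i) (fun x => by rw [abs_sub_comm]; exact hclose_pd i x)
    have hbounddq : |sInt dq h - sInt dq gε| ≤ smass dq * η' :=
      s14_sInt_dist _ hh.continuous hcs hgεcont hcsg
        (fun x => by rw [abs_sub_comm]; exact hclose_h x)
    calc |X| ≤ (∑ i, |sInt (q i) (pd i h) - sInt (q i) (pd i gε)|) +
        |sInt dq h - sInt dq gε| := by
          rw [hXeq]
          exact (abs_add_le _ _).trans (by
            gcongr
            exact Finset.abs_sum_le_sum_abs _ _)
      _ ≤ (∑ i, smass (q i) * η') + smass dq * η' :=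
          add_le_add (Finset.sum_le_sum fun i _ => hbound i) hbounddq
      _ = Mtot * η' := by rw [← Finset.sum_mul, hMtot]; ring
      _ ≤ η := by
          rw [hη', mul_div_assoc']
          rw [div_le_iff₀ h1p]
          nlinarith
  have hX0 : X = 0 := by
    by_contra hne
    have h0 : 0 < |X| := abs_pos.mpr hne
    have := key (|X| / 2) (by positivity)
    linarith
  rw [hX] at hX0
  linarith

end stmt14helpers


/-- Appendix A, formula (A.2): for `q ∈ divBV(U)` and `f ∈ C¹(Ū)`,
the field `f q` is div-BV and `γ_ν(f q) = f γ_ν q`. -/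
theorem stmt14 (n : ℕ) (U : Set (Euc n)) (hU : IsOpen U)
    (hb : Bornology.IsBounded U) (hne : U.Nonempty) (B : CkDomain n 1 U)
    (q : Fin n → MeasureTheory.SignedMeasure (Euc n)) (dq : MeasureTheory.SignedMeasure (Euc n))
    (hsupp : ∀ i, SuppOn (q i) U) (hds : SuppOn dq U)
    (hweak : ∀ ψ : Euc n → ℝ, IsTestFun U ψ →
      ∑ i, sInt (q i) (pd i ψ) = - sInt dq ψ)
    (f : Euc n → ℝ) (hf : ContDiff ℝ 1 f) :
    ∃ dm : MeasureTheory.SignedMeasure (Euc n),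
      SuppOn dm U ∧
      -- `dm = div (f q)` in the sense of distributions: `f q` is div-BV
      (∀ ψ : Euc n → ℝ, IsTestFun U ψ →
        ∑ i, sInt (q i) (fun x => f x * pd i ψ x) = - sInt dm ψ) ∧
      -- `⟨γ_ν(f q), Y⟩ = ⟨γ_ν q, f Y⟩` for every `Y ∈ C¹(Ū)`
      (∀ Y : Euc n → ℝ, IsC1 Y →
        (∑ i, sInt (q i) (fun x => f x * pd i Y x)) + sInt dm Y =
          (∑ i, sInt (q i) (pd i (fun x => f x * Y x))) +
            sInt dq (fun x => f x * Y x)) := by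
  classical
  have h1le : ((1:ℕ) : ℕ∞) ≤ (⊤ : ℕ∞) := le_top
  set dqp := dq.toJordanDecomposition.posPart with hdqp
  set dqn := dq.toJordanDecomposition.negPart with hdqn
  set qp := fun i => (q i).toJordanDecomposition.posPart with hqp
  set qn := fun i => (q i).toJordanDecomposition.negPart with hqn
  set C := closure U with hCdef
  have hCcomp : IsCompact C := hb.isCompact_closure
  have hCm : MeasurableSet C := isClosed_closure.measurableSet
  have hnullC : Cᶜ ∩ U = ∅ := by
    rw [Set.eq_empty_iff_forall_notMem]
    rintro x ⟨hx1, hx2⟩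
    exact hx1 (subset_closure hx2)
  have hdqpC : dqp Cᶜ = 0 := (s14_suppOn_jordan hds hCm.compl hnullC).1
  have hdqnC : dqn Cᶜ = 0 := (s14_suppOn_jordan hds hCm.compl hnullC).2
  have hqpC : ∀ i, qp i Cᶜ = 0 := fun i => (s14_suppOn_jordan (hsupp i) hCm.compl hnullC).1
  have hqnC : ∀ i, qn i Cᶜ = 0 := fun i => (s14_suppOn_jordan (hsupp i) hCm.compl hnullC).2
  obtain ⟨Mf, hMf⟩ := hCcomp.exists_bound_of_continuousOn hf.continuous.continuousOn
  choose Mg hMg using fun i => hCcomp.exists_bound_of_continuousOn (s14_cont_pd hf i).continuousOn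
  set wd : MeasureTheory.Measure (Euc n) → (Euc n → ℝ) → MeasureTheory.Measure (Euc n) :=
    fun ν g => ν.withDensity (fun x => ENNReal.ofReal (g x)) with hwd
  have hMf1 : ∀ x ∈ C, f x ≤ Mf := fun x hx => (le_abs_self _).trans (hMf x hx)
  have hMf2 : ∀ x ∈ C, -f x ≤ Mf := fun x hx => (neg_le_abs _).trans (hMf x hx)
  have hMg1 : ∀ i, ∀ x ∈ C, pd i f x ≤ Mg i := fun i x hx => (le_abs_self _).trans (hMg i x hx)
  have hMg2 : ∀ i, ∀ x ∈ C, -pd i f x ≤ Mg i := fun i x hx => (neg_le_abs _).trans (hMg i x hx)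
  haveI fin1 : IsFiniteMeasure (wd dqp f) := s14_isFiniteMeasure_wd _ hCm hdqpC hMf1
  haveI fin2 : IsFiniteMeasure (wd dqn (fun x => -f x)) := s14_isFiniteMeasure_wd _ hCm hdqnC hMf2
  haveI fin3 : IsFiniteMeasure (wd dqp (fun x => -f x)) := s14_isFiniteMeasure_wd _ hCm hdqpC hMf2
  haveI fin4 : IsFiniteMeasure (wd dqn f) := s14_isFiniteMeasure_wd _ hCm hdqnC hMf1
  have finqp1 : ∀ i, IsFiniteMeasure (wd (qp i) (pd i f)) := fun i =>
    s14_isFiniteMeasure_wd _ hCm (hqpC i) (hMg1 i)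
  have finqp2 : ∀ i, IsFiniteMeasure (wd (qp i) (fun x => -pd i f x)) := fun i =>
    s14_isFiniteMeasure_wd _ hCm (hqpC i) (hMg2 i)
  have finqn1 : ∀ i, IsFiniteMeasure (wd (qn i) (pd i f)) := fun i =>
    s14_isFiniteMeasure_wd _ hCm (hqnC i) (hMg1 i)
  have finqn2 : ∀ i, IsFiniteMeasure (wd (qn i) (fun x => -pd i f x)) := fun i =>
    s14_isFiniteMeasure_wd _ hCm (hqnC i) (hMg2 i)
  set P : MeasureTheory.Measure (Euc n) := wd dqp f + wd dqn (fun x => -f x) +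
    ∑ i, (wd (qp i) (pd i f) + wd (qn i) (fun x => -pd i f x)) with hP
  set N : MeasureTheory.Measure (Euc n) := wd dqp (fun x => -f x) + wd dqn f +
    ∑ i, (wd (qp i) (fun x => -pd i f x) + wd (qn i) (pd i f)) with hN
  haveI finSP : IsFiniteMeasure (∑ i, (wd (qp i) (pd i f) + wd (qn i) (fun x => -pd i f x))) :=
    s14_isFiniteMeasure_sum _ _ (fun i _ => by
      haveI := finqp1 i; haveI := finqn2 i; infer_instance)
  haveI finSN : IsFiniteMeasure (∑ i, (wd (qp i) (fun x => -pd i f x) + wd (qn i) (pd i f))) :=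
    s14_isFiniteMeasure_sum _ _ (fun i _ => by
      haveI := finqp2 i; haveI := finqn1 i; infer_instance)
  haveI finP : IsFiniteMeasure P := by rw [hP]; infer_instance
  haveI finN : IsFiniteMeasure N := by rw [hN]; infer_instance
  set dm : MeasureTheory.SignedMeasure (Euc n) := P.toSignedMeasure - N.toSignedMeasure with hdm
  -- key identity
  have key : ∀ g : Euc n → ℝ, Continuous g → HasCompactSupport g →
      sInt dm g = sInt dq (fun x => f x * g x) +
        ∑ i, sInt (q i) (fun x => pd i f x * g x) := by
    intro g hg hgcs
    have pair : ∀ (ν : MeasureTheory.Measure (Euc n)), IsFiniteMeasure ν →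
        ∀ (u : Euc n → ℝ), Continuous u →
        (∫ x, max (u x) 0 * g x ∂ν) - (∫ x, max (-u x) 0 * g x ∂ν) = ∫ x, u x * g x ∂ν := by
      intro ν hν u hu
      haveI := hν
      rw [← integral_sub
        (s14_intg (g := fun x => max (u x) 0 * g x) _ ((hu.max continuous_const).mul hg) (hgcs.mul_left))
        (s14_intg (g := fun x => max (-u x) 0 * g x) _ (((hu.neg).max continuous_const).mul hg) (hgcs.mul_left))]
      congr 1; funext x
      rcases le_total 0 (u x) with hc | hc
      · rw [max_eq_left hc, max_eq_right (by linarith)]; ring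
      · rw [max_eq_right hc, max_eq_left (by linarith)]; ring
    have hintg : ∀ (ν : MeasureTheory.Measure (Euc n)), IsFiniteMeasure ν → Integrable g ν :=
      fun ν hν => by haveI := hν; exact s14_intg _ hg hgcs
    have eP : ∫ x, g x ∂P =
        (∫ x, max (f x) 0 * g x ∂dqp) + (∫ x, max (-f x) 0 * g x ∂dqn) +
        ∑ i, ((∫ x, max (pd i f x) 0 * g x ∂(qp i)) +
          (∫ x, max (-pd i f x) 0 * g x ∂(qn i))) := by
      rw [hP, integral_add_measure ((hintg _ (by infer_instance)).add_measure
          (hintg _ (by infer_instance)))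
          (hintg _ (by infer_instance)),
        integral_add_measure (hintg _ (by infer_instance)) (hintg _ (by infer_instance)),
        integral_finset_sum_measure (fun i _ => by
          haveI := finqp1 i; haveI := finqn2 i; exact hintg _ (by infer_instance))]
      rw [s14_integral_wd _ hf.continuous, s14_integral_wd (g := fun x => -f x) _ hf.continuous.neg]
      congr 1
      apply Finset.sum_congr rfl
      intro i _
      haveI := finqp1 i; haveI := finqn2 i
      rw [integral_add_measure (hintg _ (by infer_instance)) (hintg _ (by infer_instance)),
        s14_integral_wd _ (s14_cont_pd hf i), s14_integral_wd (g := fun x => -pd i f x) _ (s14_cont_pd hf i).neg]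
    have eN : ∫ x, g x ∂N =
        (∫ x, max (-f x) 0 * g x ∂dqp) + (∫ x, max (f x) 0 * g x ∂dqn) +
        ∑ i, ((∫ x, max (-pd i f x) 0 * g x ∂(qp i)) +
          (∫ x, max (pd i f x) 0 * g x ∂(qn i))) := by
      rw [hN, integral_add_measure ((hintg _ (by infer_instance)).add_measure
          (hintg _ (by infer_instance)))
          (hintg _ (by infer_instance)),
        integral_add_measure (hintg _ (by infer_instance)) (hintg _ (by infer_instance)),
        integral_finset_sum_measure (fun i _ => by
          haveI := finqp2 i; haveI := finqn1 i; exact hintg _ (by infer_instance))]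
      rw [s14_integral_wd (g := fun x => -f x) _ hf.continuous.neg, s14_integral_wd _ hf.continuous]
      congr 1
      apply Finset.sum_congr rfl
      intro i _
      haveI := finqp2 i; haveI := finqn1 i
      rw [integral_add_measure (hintg _ (by infer_instance)) (hintg _ (by infer_instance)),
        s14_integral_wd (g := fun x => -pd i f x) _ (s14_cont_pd hf i).neg, s14_integral_wd _ (s14_cont_pd hf i)]
    rw [s14_sInt_eq_of_jordan_like dm P N rfl hg hgcs, eP, eN]
    have e1 := pair dqp inferInstance f hf.continuous
    have e2 := pair dqn inferInstance f hf.continuous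
    have e3 : ∀ i, (∫ x, max (pd i f x) 0 * g x ∂(qp i)) -
        (∫ x, max (-pd i f x) 0 * g x ∂(qp i)) = ∫ x, pd i f x * g x ∂(qp i) :=
      fun i => pair (qp i) inferInstance (pd i f) (s14_cont_pd hf i)
    have e4 : ∀ i, (∫ x, max (pd i f x) 0 * g x ∂(qn i)) -
        (∫ x, max (-pd i f x) 0 * g x ∂(qn i)) = ∫ x, pd i f x * g x ∂(qn i) :=
      fun i => pair (qn i) inferInstance (pd i f) (s14_cont_pd hf i)
    have hsInt_dq : sInt dq (fun x => f x * g x) =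
        (∫ x, f x * g x ∂dqp) - (∫ x, f x * g x ∂dqn) := rfl
    have hsInt_q : ∀ i, sInt (q i) (fun x => pd i f x * g x) =
        (∫ x, pd i f x * g x ∂(qp i)) - (∫ x, pd i f x * g x ∂(qn i)) := fun i => rfl
    rw [hsInt_dq]
    rw [Finset.sum_congr rfl (fun i _ => hsInt_q i)]
    have hsum : ∑ i, ((∫ x, max (pd i f x) 0 * g x ∂(qp i)) +
          (∫ x, max (-pd i f x) 0 * g x ∂(qn i))) -
        ∑ i, ((∫ x, max (-pd i f x) 0 * g x ∂(qp i)) +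
          (∫ x, max (pd i f x) 0 * g x ∂(qn i))) =
        ∑ i, ((∫ x, pd i f x * g x ∂(qp i)) - (∫ x, pd i f x * g x ∂(qn i))) := by
      rw [← Finset.sum_sub_distrib]
      apply Finset.sum_congr rfl
      intro i _
      have := e3 i
      have := e4 i
      linarith
    linarith [hsum, e1, e2]
  refine ⟨dm, ?_, ?_, ?_⟩
  · -- SuppOn dm U
    intro t ht htU
    have wdz : ∀ (ν : MeasureTheory.Measure (Euc n)) (u : Euc n → ℝ), ν t = 0 →
        wd ν u t = 0 := by
      intro ν u hν
      rw [hwd]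
      rw [MeasureTheory.withDensity_apply _ ht, MeasureTheory.Measure.restrict_eq_zero.mpr hν]
      exact MeasureTheory.lintegral_zero_measure _
    have hPt : P t = 0 := by
      rw [hP, MeasureTheory.Measure.add_apply, MeasureTheory.Measure.add_apply,
        MeasureTheory.Measure.finset_sum_apply]
      rw [wdz _ _ (s14_suppOn_jordan hds ht htU).1, wdz _ _ (s14_suppOn_jordan hds ht htU).2]
      have : ∀ i ∈ Finset.univ, (wd (qp i) (pd i f) + wd (qn i) (fun x => -pd i f x)) t = 0 := by
        intro i _
        rw [MeasureTheory.Measure.add_apply,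
          wdz _ _ (s14_suppOn_jordan (hsupp i) ht htU).1,
          wdz _ _ (s14_suppOn_jordan (hsupp i) ht htU).2, add_zero]
      rw [Finset.sum_congr rfl this]
      simp
    have hNt : N t = 0 := by
      rw [hN, MeasureTheory.Measure.add_apply, MeasureTheory.Measure.add_apply,
        MeasureTheory.Measure.finset_sum_apply]
      rw [wdz _ _ (s14_suppOn_jordan hds ht htU).1, wdz _ _ (s14_suppOn_jordan hds ht htU).2]
      have : ∀ i ∈ Finset.univ,
          (wd (qp i) (fun x => -pd i f x) + wd (qn i) (pd i f)) t = 0 := by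
        intro i _
        rw [MeasureTheory.Measure.add_apply,
          wdz _ _ (s14_suppOn_jordan (hsupp i) ht htU).1,
          wdz _ _ (s14_suppOn_jordan (hsupp i) ht htU).2, add_zero]
      rw [Finset.sum_congr rfl this]
      simp
    rw [hdm, MeasureTheory.VectorMeasure.sub_apply,
      MeasureTheory.Measure.toSignedMeasure_apply_measurable ht,
      MeasureTheory.Measure.toSignedMeasure_apply_measurable ht,
      MeasureTheory.measureReal_def, MeasureTheory.measureReal_def, hPt, hNt]
    simp
  · -- weak formula for dm
    intro ψ hψ
    obtain ⟨hψs, hψcs, hψsub⟩ := hψ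
    have hψ1 : ContDiff ℝ 1 ψ := hψs.of_le (by exact_mod_cast le_top)
    set F : Euc n → ℝ := fun x => f x * ψ x with hF
    have hF1 : ContDiff ℝ 1 F := hf.mul hψ1
    have hFcs : HasCompactSupport F := hψcs.mul_left
    have hFsub : tsupport F ⊆ U :=
      (closure_mono (Function.support_mul_subset_right _ _)).trans hψsub
    have W := s14_weak_ext hU q dq hweak F hF1 hFcs hFsub
    have hsplit : ∀ i, sInt (q i) (pd i F) =
        sInt (q i) (fun x => f x * pd i ψ x) + sInt (q i) (fun x => pd i f x * ψ x) := by
      intro i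
      have heq : pd i F = fun x => f x * pd i ψ x + pd i f x * ψ x :=
        funext (s14_pd_mul hf hψ1 i)
      rw [heq, s14_sInt_add (a := fun x => f x * pd i ψ x) (b := fun x => pd i f x * ψ x) _ (hf.continuous.mul (s14_cont_pd hψ1 i))
        ((s14_hcs_pd hψcs i).mul_left)
        ((s14_cont_pd hf i).mul hψ1.continuous) (hψcs.mul_left)]
    have hkey := key ψ hψ1.continuous hψcs
    have hsum : ∑ i, sInt (q i) (pd i F) =
        (∑ i, sInt (q i) (fun x => f x * pd i ψ x)) +
        ∑ i, sInt (q i) (fun x => pd i f x * ψ x) := by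
      rw [Finset.sum_congr rfl (fun i _ => hsplit i), Finset.sum_add_distrib]
    rw [hkey] at *
    linarith [W, hsum]
  · -- trace identity
    intro Y hY
    obtain ⟨hY1, hYcs⟩ := hY
    have hkey := key Y hY1.continuous hYcs
    have hsplit : ∀ i, sInt (q i) (pd i (fun x => f x * Y x)) =
        sInt (q i) (fun x => f x * pd i Y x) + sInt (q i) (fun x => pd i f x * Y x) := by
      intro i
      have heq : pd i (fun x => f x * Y x) = fun x => f x * pd i Y x + pd i f x * Y x :=
        funext (s14_pd_mul hf hY1 i)
      rw [heq, s14_sInt_add (a := fun x => f x * pd i Y x) (b := fun x => pd i f x * Y x) _ (hf.continuous.mul (s14_cont_pd hY1 i))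
        ((s14_hcs_pd hYcs i).mul_left)
        ((s14_cont_pd hf i).mul hY1.continuous) (hYcs.mul_left)]
    rw [hkey, Finset.sum_congr rfl (fun i _ => hsplit i), Finset.sum_add_distrib]
    ring


end
end
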